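/- (Borel's normal number theorem, representative of Borel's probabilistic work discussed in the entry) Lebesgue-almost every real number x in [0,1] is simply normal in base 2: the proportion of 1's among the first n binary digits of x converges to 1/2 as n → ∞. -/

import Mathlib

open MeasureTheory Filter Finset ProbabilityTheory
open scoped ENNReal NNReal


lemma count_low (N : ℕ) (q : ℕ → Prop) [DecidablePred q] :
    ((range (2*N)).filter (fun k => k % 2 = 1 ∧ q (k/2))).card
      = ((range N).filter q).card := by
  have himg : (range (2*N)).filter (fun k => k % 2 = 1 ∧ q (k/2))
      = ((range N).filter q).image (fun r => 2*r+1) := by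
    ext k
    simp only [mem_filter, mem_range, mem_image]
    constructor
    · rintro ⟨h1, h2, h3⟩
      exact ⟨k/2, ⟨by omega, h3⟩, by omega⟩
    · rintro ⟨r, ⟨hr, hq⟩, rfl⟩
      have h : (2*r+1)/2 = r := by omega
      exact ⟨by omega, by omega, by rwa [h]⟩
  rw [himg, card_image_of_injective _ (fun a b h => by omega)]

lemma count_odd (M : ℕ) :
    ((range (2*M)).filter (fun k => k % 2 = 1)).card = M := by
  have := count_low M (fun _ => True)
  simpa using this

lemma count_mid (P M : ℕ) (hP : 0 < P) :
    ((range (2*P*M)).filter (fun r => r / P % 2 = 1)).card = P * M := by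
  have himg : (range (2*P*M)).filter (fun r => r / P % 2 = 1)
      = ((range M ×ˢ range P)).image (fun qs => qs.1*(2*P) + P + qs.2) := by
    ext r
    simp only [mem_filter, mem_range, mem_image, mem_product]
    constructor
    · rintro ⟨h1, h2⟩
      have key : r % (2*P) / P = r / P % 2 := by
        rw [show 2*P = P*2 by ring, Nat.mod_mul_right_div_self]
      have hmod : r % (2*P) / P = 1 := by rw [key, h2]
      have e1 : P * (r % (2*P) / P) + r % (2*P) % P = r % (2*P) := Nat.div_add_mod _ _
      rw [hmod] at e1
      have e2 : r % (2*P) % P < P := Nat.mod_lt _ hP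
      have e4 : r % (2*P) < 2*P := Nat.mod_lt _ (by omega)
      have e3 : 2*P * (r / (2*P)) + r % (2*P) = r := Nat.div_add_mod _ _
      have e3' : r / (2*P) * (2*P) = 2*P * (r / (2*P)) := mul_comm _ _
      have e5 : 2*P*M = M * (2*P) := by ring
      refine ⟨(r/(2*P), r % (2*P) - P), ⟨?_, by omega⟩, ?_⟩
      · rw [Nat.div_lt_iff_lt_mul (by omega : 0 < 2*P)]
        omega
      · show r / (2*P) * (2*P) + P + (r % (2*P) - P) = r
        omega
    · rintro ⟨⟨q, s⟩, ⟨hq, hs⟩, rfl⟩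
      constructor
      · have h := mul_le_mul_left (show q+1 ≤ M by omega) (2*P)
        have e : (q+1)*(2*P) = q*(2*P) + 2*P := by ring
        have e5 : 2*P*M = M * (2*P) := by ring
        show q*(2*P) + P + s < 2*P*M
        omega
      · show (q*(2*P) + P + s) / P % 2 = 1
        have e6 : q*(2*P)+P+s = s + P + P*(2*q) := by ring
        rw [e6, Nat.add_mul_div_left _ _ hP, Nat.add_div_right _ hP,
          Nat.div_eq_of_lt hs]
        omega
  rw [himg, card_image_of_injOn, card_product, card_range, card_range]
  · ring
  · rintro ⟨q, s⟩ hqs ⟨q', s'⟩ hqs' h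
    have hqs2 : q < M ∧ s < P := by simpa using hqs
    have hqs2' : q' < M ∧ s' < P := by simpa using hqs'
    obtain ⟨hq, hs⟩ := hqs2; obtain ⟨hq', hs'⟩ := hqs2'
    have h' : q*(2*P)+P+s = q'*(2*P)+P+s' := h
    have h1 : (q*(2*P) + P + s) % (2*P) = P + s := by
      rw [show q*(2*P) + P + s = (P+s) + q*(2*P) by ring,
        Nat.add_mul_mod_self_right, Nat.mod_eq_of_lt (by omega)]
    have h2 : (q'*(2*P) + P + s') % (2*P) = P + s' := by
      rw [show q'*(2*P) + P + s' = (P+s') + q'*(2*P) by ring,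
        Nat.add_mul_mod_self_right, Nat.mod_eq_of_lt (by omega)]
    have h3 : (q*(2*P)+P+s) % (2*P) = (q'*(2*P)+P+s') % (2*P) := by rw [h']
    have hss : s = s' := by omega
    subst hss
    have hq2 : q * (2*P) = q' * (2*P) := by omega
    have : q = q' := Nat.eq_of_mul_eq_mul_right (by omega) hq2
    simp [this]

lemma measure_floorSet (n : ℕ) (p : ℕ → Prop) [DecidablePred p] :
    volume {x : ℝ | x ∈ Set.Ico (0:ℝ) 1 ∧ p ⌊x * 2^n⌋₊} =
      (((range (2^n)).filter p).card : ℝ≥0∞) * ENNReal.ofReal (1/2^n) := by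
  have h2n : (0:ℝ) < 2^n := by positivity
  set F := (range (2^n)).filter p with hF
  have hset : {x : ℝ | x ∈ Set.Ico (0:ℝ) 1 ∧ p ⌊x * 2^n⌋₊}
      = ⋃ k ∈ F, Set.Ico ((k:ℝ)/2^n) ((k+1)/2^n) := by
    ext x
    simp only [Set.mem_setOf_eq, Set.mem_Ico, Set.mem_iUnion, mem_filter,
      mem_range, exists_prop, hF]
    constructor
    · rintro ⟨⟨hx0, hx1⟩, hp⟩
      have hxn : 0 ≤ x * 2^n := by positivity
      refine ⟨⌊x * 2^n⌋₊, ⟨?_, hp⟩, ?_, ?_⟩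
      · apply (Nat.floor_lt hxn).2
        push_cast
        nlinarith
      · rw [div_le_iff₀ h2n]
        exact Nat.floor_le hxn
      · rw [lt_div_iff₀ h2n]
        exact Nat.lt_floor_add_one _
    · rintro ⟨k, ⟨hk, hp⟩, hx1, hx2⟩
      have hb1 : (k:ℝ) ≤ x * 2^n := by rwa [div_le_iff₀ h2n] at hx1
      have hb2 : x * 2^n < (k:ℝ) + 1 := by rwa [lt_div_iff₀ h2n] at hx2
      have hfl : ⌊x * 2^n⌋₊ = k := by
        rw [Nat.floor_eq_iff (le_trans (Nat.cast_nonneg k) hb1)]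
        exact ⟨hb1, by push_cast; linarith⟩
      refine ⟨⟨?_, ?_⟩, hfl ▸ hp⟩
      · have : (0:ℝ) ≤ (k:ℝ)/2^n := by positivity
        linarith
      · have hk1 : ((k:ℝ)+1) ≤ 2^n := by
          have : (k+1 : ℕ) ≤ 2^n := hk
          exact_mod_cast this
        have : ((k:ℝ)+1)/2^n ≤ 1 := by
          rw [div_le_one h2n]; exact hk1
        linarith
  rw [hset, measure_biUnion_finset]
  · have hvol : ∀ k : ℕ, volume (Set.Ico ((k:ℝ)/2^n) (((k:ℝ)+1)/2^n))
        = ENNReal.ofReal (1/2^n) := by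
      intro k
      rw [Real.volume_Ico]
      congr 1
      field_simp
      ring
    rw [Finset.sum_congr rfl (fun k _ => hvol k), Finset.sum_const, nsmul_eq_mul]
  · intro a _ b _ hab
    simp only [Function.onFun]
    rw [Set.Ico_disjoint_Ico]
    rcases hab.lt_or_gt with h | h
    · have : ((a:ℝ)+1)/2^n ≤ (b:ℝ)/2^n := by
        gcongr
        exact_mod_cast h
      exact le_trans (min_le_left _ _) (le_trans this (le_max_right _ _))
    · have : ((b:ℝ)+1)/2^n ≤ (a:ℝ)/2^n := by
        gcongr
        exact_mod_cast h
      exact le_trans (min_le_right _ _) (le_trans this (le_max_left _ _))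
  · exact fun k _ => measurableSet_Ico

noncomputable def BE (i : ℕ) : Set ℝ := {x : ℝ | ⌊x * 2^(i+1)⌋ % 2 = 1}

lemma measurable_BE (i : ℕ) : MeasurableSet (BE i) := by
  have : BE i = (fun x : ℝ => ⌊x * 2^(i+1)⌋ % 2) ⁻¹' {1} := rfl
  rw [this]
  have hf : Measurable (fun x : ℝ => ⌊x * 2^(i+1)⌋ % 2) :=
    (measurable_from_top (f := fun k : ℤ => k % 2)).comp
      (Int.measurable_floor.comp (measurable_id.mul_const _))
  exact hf (measurableSet_singleton 1)

lemma natfloor_cond (x : ℝ) (hx : 0 ≤ x) (m : ℕ) :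
    (⌊x * 2^m⌋ % 2 = 1) ↔ (⌊x * 2^m⌋₊ % 2 = 1) := by
  have hc : ((⌊x * 2^m⌋₊ : ℤ)) = ⌊x * 2^m⌋ :=
    Int.natCast_floor_eq_floor (by positivity)
  omega

lemma BE_inter_Ico (i : ℕ) :
    BE i ∩ Set.Ico (0:ℝ) 1
      = {x : ℝ | x ∈ Set.Ico (0:ℝ) 1 ∧ (fun k => k % 2 = 1) ⌊x * 2^(i+1)⌋₊} := by
  ext x
  simp only [BE, Set.mem_inter_iff, Set.mem_setOf_eq, Set.mem_Ico]
  constructor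
  · rintro ⟨h1, h2⟩
    exact ⟨h2, (natfloor_cond x h2.1 (i+1)).1 h1⟩
  · rintro ⟨h2, h1⟩
    exact ⟨(natfloor_cond x h2.1 (i+1)).2 h1, h2⟩

lemma meas_BE (i : ℕ) :
    (volume.restrict (Set.Ico (0:ℝ) 1)) (BE i) = ENNReal.ofReal (1/2) := by
  rw [Measure.restrict_apply (measurable_BE i), BE_inter_Ico i,
    measure_floorSet (i+1) (fun k => k % 2 = 1)]
  rw [show 2^(i+1) = 2*2^i from by rw [pow_succ]; ring, count_odd]
  rw [← ENNReal.ofReal_natCast (2^i), ← ENNReal.ofReal_mul (by positivity)]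
  congr 1
  push_cast
  rw [show ((2:ℝ))^(i+1) = 2^i*2 from pow_succ 2 i]
  have h2i : (0:ℝ) < 2^i := by positivity
  field_simp

lemma floor_pair (x : ℝ) (hx : 0 ≤ x) (i d : ℕ) :
    ⌊x * 2^(i+1)⌋₊ = ⌊x * 2^(i+d+1+1)⌋₊ / 2^(d+1) := by
  have he : x * 2^(i+1) = (x * 2^(i+d+1+1)) / ((2^(d+1) : ℕ) : ℝ) := by
    rw [eq_div_iff (by positivity)]
    push_cast
    ring
  rw [he, Nat.floor_div_natCast]

lemma BE_pair_inter_Ico (i d : ℕ) :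
    (BE i ∩ BE (i+d+1)) ∩ Set.Ico (0:ℝ) 1
      = {x : ℝ | x ∈ Set.Ico (0:ℝ) 1 ∧
          (fun k => k % 2 = 1 ∧ k / 2^(d+1) % 2 = 1) ⌊x * 2^(i+d+1+1)⌋₊} := by
  ext x
  simp only [BE, Set.mem_inter_iff, Set.mem_setOf_eq, Set.mem_Ico]
  constructor
  · rintro ⟨⟨h1, h2⟩, h3⟩
    refine ⟨h3, (natfloor_cond x h3.1 _).1 h2, ?_⟩
    rw [← floor_pair x h3.1 i d]
    exact (natfloor_cond x h3.1 _).1 h1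
  · rintro ⟨h3, h2, h1⟩
    rw [← floor_pair x h3.1 i d] at h1
    exact ⟨⟨(natfloor_cond x h3.1 _).2 h1, (natfloor_cond x h3.1 _).2 h2⟩, h3⟩

lemma count_pair (i d : ℕ) :
    ((range (2^(i+d+1+1))).filter
        (fun k => k % 2 = 1 ∧ k / 2^(d+1) % 2 = 1)).card = 2^(d+i) := by
  have hdd : ∀ k : ℕ, k / 2^(d+1) = (k/2)/2^d := by
    intro k
    rw [Nat.div_div_eq_div_mul, ← pow_succ']
  have hcongr : (range (2^(i+d+1+1))).filter (fun k => k % 2 = 1 ∧ k / 2^(d+1) % 2 = 1)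
      = (range (2*2^(i+d+1))).filter
          (fun k => k % 2 = 1 ∧ (fun r => r / 2^d % 2 = 1) (k/2)) := by
    rw [show (2:ℕ)^(i+d+1+1) = 2*2^(i+d+1) from by rw [pow_succ]; ring]
    apply Finset.filter_congr
    intro k _
    simp [hdd k]
  rw [hcongr, count_low (2^(i+d+1)) (fun r => r / 2^d % 2 = 1),
    show (2:ℕ)^(i+d+1) = 2*2^d*2^i from by ring,
    count_mid _ _ (by positivity), ← pow_add]

lemma meas_BE_pair (i d : ℕ) :
    (volume.restrict (Set.Ico (0:ℝ) 1)) (BE i ∩ BE (i+d+1))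
      = ENNReal.ofReal (1/4) := by
  rw [Measure.restrict_apply ((measurable_BE i).inter (measurable_BE (i+d+1))),
    BE_pair_inter_Ico i d,
    measure_floorSet (i+d+1+1) (fun k => k % 2 = 1 ∧ k / 2^(d+1) % 2 = 1),
    count_pair i d]
  rw [← ENNReal.ofReal_natCast (2^(d+i)), ← ENNReal.ofReal_mul (by positivity)]
  congr 1
  push_cast
  have h1 : ((2:ℝ))^(i+d+1+1) = 2^(d+i) * 4 := by ring
  rw [h1]
  have h2 : (0:ℝ) < 2^(d+i) := by positivity
  field_simp

section ClassicalSection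
open scoped Classical

lemma indicator_preimage_meas {μ : Measure ℝ} [IsProbabilityMeasure μ] {A : Set ℝ}
    (hA : MeasurableSet A) (s : Set ℝ) :
    μ ((A.indicator (fun _ => (1:ℝ))) ⁻¹' s)
      = (if (1:ℝ) ∈ s then μ A else 0) + (if (0:ℝ) ∈ s then μ Aᶜ else 0) := by
  classical
  have hpre : (A.indicator (fun _ => (1:ℝ))) ⁻¹' s
      = (if (1:ℝ) ∈ s then A else ∅) ∪ (if (0:ℝ) ∈ s then Aᶜ else ∅) := by
    ext x
    by_cases hx : x ∈ A <;> by_cases h1 : (1:ℝ) ∈ s <;> by_cases h0 : (0:ℝ) ∈ s <;>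
      simp [Set.indicator_apply, hx, h1, h0]
  rw [hpre]
  split_ifs with h1 h0 h0
  · rw [Set.union_compl_self, measure_univ, measure_add_measure_compl hA, measure_univ]
  · simp
  · simp
  · simp

lemma ident_indicator {μ : Measure ℝ} [IsProbabilityMeasure μ] {A B : Set ℝ}
    (hA : MeasurableSet A) (hB : MeasurableSet B) (hAB : μ A = μ B) :
    IdentDistrib (A.indicator fun _ => (1:ℝ)) (B.indicator fun _ => (1:ℝ)) μ μ := by
  refine ⟨(measurable_const.indicator hA).aemeasurable,
    (measurable_const.indicator hB).aemeasurable, ?_⟩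
  ext s hs
  rw [Measure.map_apply (measurable_const.indicator hA) hs,
    Measure.map_apply (measurable_const.indicator hB) hs,
    indicator_preimage_meas hA, indicator_preimage_meas hB, hAB,
    measure_compl hA (measure_ne_top _ _), measure_compl hB (measure_ne_top _ _), hAB]

lemma indep_pair {μ : Measure ℝ} [IsProbabilityMeasure μ] {A B : Set ℝ}
    (hA : MeasurableSet A) (hB : MeasurableSet B)
    (hABm : μ (A ∩ B) = μ A * μ B) :
    IndepFun (A.indicator fun _ => (1:ℝ)) (B.indicator fun _ => (1:ℝ)) μ := by
  classical
  set s : Bool → Set ℝ := fun b => if b then A else B with hs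
  have hmeas : ∀ b, MeasurableSet (s b) := by rintro (_|_) <;> simp [hs, hA, hB]
  have hind : iIndepSet s μ := by
    rw [iIndepSet_iff_meas_biInter hmeas]
    intro t
    have ht : ∀ t : Finset Bool, t = ∅ ∨ t = {true} ∨ t = {false} ∨ t = {false, true} := by
      decide
    rcases ht t with rfl | rfl | rfl | rfl
    · simp
    · simp
    · simp
    · have hbi : ⋂ i ∈ ({false, true} : Finset Bool), s i = B ∩ A := by
        ext x; simp [hs]
      rw [hbi, Finset.prod_insert (by simp), Finset.prod_singleton]
      have e1 : s false = B := by simp [hs]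
      have e2 : s true = A := by simp [hs]
      rw [e1, e2, Set.inter_comm, hABm, mul_comm]
  have h2 : iIndepFun
      (fun b => (s b).indicator fun _ => (1:ℝ)) μ := hind.iIndepFun_indicator
  have h3 := h2.indepFun (show (true : Bool) ≠ false by simp)
  simpa [hs] using h3

end ClassicalSection

open Filter

theorem borel_simply_normal_base_two :
    ∀ᵐ x ∂(volume.restrict (Set.Icc (0 : ℝ) 1)),
      Tendsto (fun n : ℕ =>
          (((Finset.range n).filter (fun i => ⌊x * 2 ^ (i + 1)⌋ % 2 = 1)).card : ℝ) / n)
        atTop (nhds (1 / 2)) := by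
  have hres : volume.restrict (Set.Icc (0:ℝ) 1) = volume.restrict (Set.Ico (0:ℝ) 1) :=
    (Measure.restrict_congr_set Ico_ae_eq_Icc).symm
  rw [hres]
  set μ := volume.restrict (Set.Ico (0:ℝ) 1) with hμ
  have hprob : IsProbabilityMeasure μ := by
    constructor
    rw [hμ, Measure.restrict_apply MeasurableSet.univ, Set.univ_inter, Real.volume_Ico]
    norm_num
  set X : ℕ → ℝ → ℝ := fun i => (BE i).indicator (fun _ => (1:ℝ)) with hX
  have hint : Integrable (X 0) μ := (integrable_const (1:ℝ)).indicator (measurable_BE 0)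
  have hmul : ∀ i j, i < j → μ (BE i ∩ BE j) = μ (BE i) * μ (BE j) := by
    intro i j hij
    obtain ⟨d, rfl⟩ : ∃ d, j = i + d + 1 := ⟨j - i - 1, by omega⟩
    rw [hμ, meas_BE_pair i d, meas_BE, meas_BE, ← ENNReal.ofReal_mul (by norm_num)]
    norm_num
  have hindep : Pairwise (Function.onFun (IndepFun · · μ) X) := by
    intro i j hij
    rcases hij.lt_or_gt with h | h
    · exact indep_pair (measurable_BE i) (measurable_BE j) (hmul i j h)
    · exact (indep_pair (measurable_BE j) (measurable_BE i) (hmul j i h)).symm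
  have hident : ∀ i, IdentDistrib (X i) (X 0) μ μ := fun i =>
    ident_indicator (measurable_BE i) (measurable_BE 0)
      (by rw [hμ, meas_BE, meas_BE])
  have hSLLN := ProbabilityTheory.strong_law_ae_real X hint hindep hident
  have hmean : μ[X 0] = 1/2 := by
    rw [hX]
    rw [integral_indicator_const (1:ℝ) (measurable_BE 0), hμ, measureReal_def, meas_BE, smul_eq_mul, mul_one,
      ENNReal.toReal_ofReal (by norm_num)]
  rw [hmean] at hSLLN
  filter_upwards [hSLLN] with x hx
  have hsum : ∀ n : ℕ, ∑ i ∈ Finset.range n, X i x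
      = (((Finset.range n).filter (fun i => ⌊x * 2 ^ (i + 1)⌋ % 2 = 1)).card : ℝ) := by
    intro n
    rw [hX]
    simp only [Set.indicator_apply, BE, Set.mem_setOf_eq]
    rw [Finset.sum_boole]
  exact hx.congr (fun n => by rw [hsum n])
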